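/- Let F be a nonempty intersecting family of k-element subsets of [n] with covering number τ(F) = τ ≥ 1. Then there exists a family H of τ-element subsets of [n] with |H| ≤ τ · k^{τ−1} that set-covers F, i.e., for every F ∈ F there exists H ∈ H with H ⊆ F. -/

import Mathlib

/-- A nonempty intersecting family of `k`-subsets of `[n]` with covering number exactly `τ ≥ 1`
can be set-covered by a family of at most `τ · k^(τ-1)` sets of size `τ`. -/
theorem setCover_of_intersecting (n k τ : ℕ) (hτ : 1 ≤ τ)
    (F : Finset (Finset (Fin n))) (hne : F.Nonempty)
    (huniform : ∀ A ∈ F, A.card = k)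
    (hint : ∀ A ∈ F, ∀ B ∈ F, (A ∩ B).Nonempty)
    (hcov : ∃ C : Finset (Fin n), (∀ A ∈ F, (C ∩ A).Nonempty) ∧ C.card = τ)
    (hmin : ∀ C : Finset (Fin n), (∀ A ∈ F, (C ∩ A).Nonempty) → τ ≤ C.card) :
    ∃ H : Finset (Finset (Fin n)),
      (∀ h ∈ H, h.card = τ) ∧
      H.card ≤ τ * k ^ (τ - 1) ∧
      ∀ A ∈ F, ∃ h ∈ H, h ⊆ A := by
  classical
  obtain ⟨C, hC, hCcard⟩ := hcov
  set B : Finset (Fin n) → Finset (Fin n) := fun S =>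
    if h : ∃ A ∈ F, S ∩ A = ∅ then h.choose else ∅ with hB
  have hBspec : ∀ S : Finset (Fin n), S.card < τ → B S ∈ F ∧ S ∩ B S = ∅ := by
    intro S hS
    have hex : ∃ A ∈ F, S ∩ A = ∅ := by
      by_contra hc
      push_neg at hc
      have : τ ≤ S.card := hmin S (fun A hA => by
        rcases Finset.eq_empty_or_nonempty (S ∩ A) with h | h
        · exact absurd h (Finset.nonempty_iff_ne_empty.mp (hc A hA))
        · exact h)
      omega
    simp only [hB, dif_pos hex]
    exact ⟨hex.choose_spec.1, hex.choose_spec.2⟩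
  let Hfam : ℕ → Finset (Finset (Fin n)) := fun i =>
    Nat.rec (C.image ({·})) (fun _ Hi => Hi.biUnion fun S => (B S).image (insert · S)) i
  have H0 : Hfam 0 = C.image ({·}) := rfl
  have Hsucc : ∀ i, Hfam (i+1) = (Hfam i).biUnion (fun S => (B S).image (insert · S)) :=
    fun i => rfl
  have key : ∀ i, i + 1 ≤ τ →
      (∀ S ∈ Hfam i, S.card = i + 1) ∧ (Hfam i).card ≤ τ * k ^ i ∧
      (∀ A ∈ F, ∃ S ∈ Hfam i, S ⊆ A) := by
    intro i
    induction i with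
    | zero =>
      intro _
      refine ⟨?_, ?_, ?_⟩
      · intro S hS
        rw [H0, Finset.mem_image] at hS
        obtain ⟨x, _, rfl⟩ := hS
        simp
      · rw [H0]
        calc (C.image ({·})).card ≤ C.card := Finset.card_image_le
          _ = τ * k ^ 0 := by simp [hCcard]
      · intro A hA
        obtain ⟨x, hx⟩ := hC A hA
        rw [Finset.mem_inter] at hx
        rw [H0]
        exact ⟨{x}, Finset.mem_image_of_mem _ hx.1, Finset.singleton_subset_iff.2 hx.2⟩
    | succ i ih =>
      intro hle
      obtain ⟨hcard, hbound, hcover⟩ := ih (by omega)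
      have hBS : ∀ S ∈ Hfam i, B S ∈ F ∧ S ∩ B S = ∅ := fun S hS =>
        hBspec S (by rw [hcard S hS]; omega)
      refine ⟨?_, ?_, ?_⟩
      · intro S hS
        rw [Hsucc, Finset.mem_biUnion] at hS
        simp only [Finset.mem_image] at hS
        obtain ⟨T, hT, x, hx, rfl⟩ := hS
        have hxT : x ∉ T := fun hxT => by
          have h1 := (hBS T hT).2
          have h2 : x ∈ T ∩ B T := Finset.mem_inter.2 ⟨hxT, hx⟩
          simp_all
        rw [Finset.card_insert_of_notMem hxT, hcard T hT]
      · rw [Hsucc]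
        calc ((Hfam i).biUnion (fun S => (B S).image (insert · S))).card
            ≤ ∑ S ∈ Hfam i, ((B S).image (insert · S)).card := Finset.card_biUnion_le
          _ ≤ ∑ S ∈ Hfam i, k := by
              refine Finset.sum_le_sum fun S hS => ?_
              calc ((B S).image (insert · S)).card ≤ (B S).card := Finset.card_image_le
                _ = k := huniform _ (hBS S hS).1
          _ = (Hfam i).card * k := by rw [Finset.sum_const, smul_eq_mul]
          _ ≤ τ * k ^ i * k := Nat.mul_le_mul_right k hbound
          _ = τ * k ^ (i+1) := by ring
      · intro A hA
        obtain ⟨S, hS, hSA⟩ := hcover A hA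
        obtain ⟨x, hx⟩ := hint A hA (B S) (hBS S hS).1
        rw [Finset.mem_inter] at hx
        refine ⟨insert x S, ?_, Finset.insert_subset hx.1 hSA⟩
        rw [Hsucc, Finset.mem_biUnion]
        exact ⟨S, hS, Finset.mem_image_of_mem _ hx.2⟩
  obtain ⟨h1, h2, h3⟩ := key (τ - 1) (by omega)
  refine ⟨Hfam (τ - 1), fun h hh => ?_, h2, h3⟩
  rw [h1 h hh]; omega
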